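/- Let f : ℝ → ℝ be twice continuously differentiable with f(θ) > 0 and f(θ) + f''(θ) > 0 for all θ ∈ ℝ. Then for every θ ∈ ℝ and every Δθ with 0 < Δθ ≤ π/2, one has f(θ) + (f(θ + Δθ) - 2·f(θ) + f(θ - Δθ))/(2·(1 - cos Δθ)) > 0; equivalently, f(θ + Δθ) + f(θ - Δθ) > 2·cos(Δθ)·f(θ). -/

import Mathlib

open Real

/-- Positivity of the discrete crystalline interfacial-energy coefficients:
if `f > 0` and `f + f'' > 0` everywhere, then for every `θ` and every
`0 < Δθ ≤ π/2`, `f(θ) + (f(θ+Δθ) - 2 f(θ) + f(θ-Δθ))/(2 (1 - cos Δθ)) > 0`;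
equivalently `f(θ+Δθ) + f(θ-Δθ) > 2 cos(Δθ) f(θ)`. -/
theorem stmt0 (f : ℝ → ℝ) (hf : ContDiff ℝ 2 f)
    (hfpos : ∀ θ : ℝ, 0 < f θ)
    (hfpp : ∀ θ : ℝ, 0 < f θ + deriv (deriv f) θ) :
    ∀ θ Δθ : ℝ, 0 < Δθ → Δθ ≤ π / 2 →
      0 < f θ + (f (θ + Δθ) - 2 * f θ + f (θ - Δθ)) / (2 * (1 - Real.cos Δθ)) ∧
      2 * Real.cos Δθ * f θ < f (θ + Δθ) + f (θ - Δθ) := by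
  intro θ Δθ hΔ1 hΔ2
  have hd1 : Differentiable ℝ f := hf.differentiable (by norm_num)
  have hd2 : Differentiable ℝ (deriv f) := by
    have hf2 : ContDiff ℝ ((1:ℕ∞)+1) f := by exact_mod_cast hf
    exact (contDiff_succ_iff_deriv.mp hf2).2.2.differentiable (by norm_num)
  set v : ℝ → ℝ := fun t => f (θ + t) + f (θ - t) - 2 * f θ * Real.cos t with hv_def
  set v1 : ℝ → ℝ := fun t => deriv f (θ + t) - deriv f (θ - t) + 2 * f θ * Real.sin t with hv1_def
  set v2 : ℝ → ℝ := fun t => deriv (deriv f) (θ + t) + deriv (deriv f) (θ - t) + 2 * f θ * Real.cos t with hv2_def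
  set W : ℝ → ℝ := fun t => v1 t * Real.sin t - v t * Real.cos t with hW_def
  have hadd : ∀ t : ℝ, HasDerivAt (fun t : ℝ => θ + t) 1 t := fun t => (hasDerivAt_id t).const_add θ
  have hsub : ∀ t : ℝ, HasDerivAt (fun t : ℝ => θ - t) (-1) t := fun t => (hasDerivAt_id t).const_sub θ
  have hv : ∀ t : ℝ, HasDerivAt v (v1 t) t := by
    intro t
    have h1 : HasDerivAt (fun t : ℝ => f (θ + t)) (deriv f (θ + t) * 1) t :=
      ((hd1 (θ + t)).hasDerivAt).comp t (hadd t)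
    have h2 : HasDerivAt (fun t : ℝ => f (θ - t)) (deriv f (θ - t) * (-1)) t :=
      ((hd1 (θ - t)).hasDerivAt).comp t (hsub t)
    have h3 : HasDerivAt (fun t : ℝ => 2 * f θ * Real.cos t) (2 * f θ * (-Real.sin t)) t :=
      (Real.hasDerivAt_cos t).const_mul (2 * f θ)
    have := (h1.add h2).sub h3
    refine this.congr_deriv ?_
    simp only [hv1_def]; ring
  have hv1 : ∀ t : ℝ, HasDerivAt v1 (v2 t) t := by
    intro t
    have h1 : HasDerivAt (fun t : ℝ => deriv f (θ + t)) (deriv (deriv f) (θ + t) * 1) t :=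
      ((hd2 (θ + t)).hasDerivAt).comp t (hadd t)
    have h2 : HasDerivAt (fun t : ℝ => deriv f (θ - t)) (deriv (deriv f) (θ - t) * (-1)) t :=
      ((hd2 (θ - t)).hasDerivAt).comp t (hsub t)
    have h3 : HasDerivAt (fun t : ℝ => 2 * f θ * Real.sin t) (2 * f θ * Real.cos t) t :=
      (Real.hasDerivAt_sin t).const_mul (2 * f θ)
    have := (h1.sub h2).add h3
    refine this.congr_deriv ?_
    simp only [hv2_def]; ring
  have hW : ∀ t : ℝ, HasDerivAt W ((v2 t + v t) * Real.sin t) t := by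
    intro t
    have := ((hv1 t).mul (Real.hasDerivAt_sin t)).sub ((hv t).mul (Real.hasDerivAt_cos t))
    refine this.congr_deriv ?_
    ring
  have hpos : ∀ t : ℝ, 0 < v2 t + v t := by
    intro t
    have h1 := hfpp (θ + t); have h2 := hfpp (θ - t)
    simp only [hv2_def, hv_def]
    nlinarith [h1, h2]
  have hW0 : W 0 = 0 := by simp [hW_def, hv_def, hv1_def]; ring
  have hWmono : StrictMonoOn W (Set.Icc 0 Δθ) := by
    apply strictMonoOn_of_deriv_pos (convex_Icc 0 Δθ)
    · exact (Differentiable.continuous (fun t => (hW t).differentiableAt)).continuousOn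
    · intro t ht
      rw [interior_Icc] at ht
      rw [(hW t).deriv]
      have hsin : 0 < Real.sin t := Real.sin_pos_of_pos_of_lt_pi ht.1
        (lt_of_lt_of_le ht.2 (by linarith [Real.pi_pos]))
      exact mul_pos (hpos t) hsin
  have hWpos : ∀ t ∈ Set.Ioc (0:ℝ) Δθ, 0 < W t := by
    intro t ht
    have := hWmono (Set.left_mem_Icc.mpr hΔ1.le) ⟨ht.1.le, ht.2⟩ ht.1
    rwa [hW0] at this
  -- sin is positive on (0, Δθ]
  have hsinpos : ∀ t : ℝ, 0 < t → t ≤ Δθ → 0 < Real.sin t := by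
    intro t h1 h2
    exact Real.sin_pos_of_pos_of_lt_pi h1 (by nlinarith [Real.pi_pos, hΔ2])
  -- key monotonicity of v/sin
  have key : ∀ a b : ℝ, 0 < a → a < b → b ≤ Δθ → v a / Real.sin a < v b / Real.sin b := by
    intro a b ha hab hb
    have hmono : StrictMonoOn (fun t => v t / Real.sin t) (Set.Icc a b) := by
      apply strictMonoOn_of_deriv_pos (convex_Icc a b)
      · intro t ht
        have hsin : Real.sin t ≠ 0 := (hsinpos t (lt_of_lt_of_le ha ht.1) (le_trans ht.2 hb)).ne'
        exact (((hv t).div (Real.hasDerivAt_sin t) hsin).continuousAt).continuousWithinAt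
      · intro t ht
        rw [interior_Icc] at ht
        have ht1 : 0 < t := lt_trans ha ht.1
        have ht2 : t ≤ Δθ := le_of_lt (lt_of_lt_of_le ht.2 hb)
        have hsin : Real.sin t ≠ 0 := (hsinpos t ht1 ht2).ne'
        rw [show (fun t => v t / Real.sin t) = v / Real.sin from rfl, ((hv t).div (Real.hasDerivAt_sin t) hsin).deriv]
        have : (v1 t * Real.sin t - v t * Real.cos t) = W t := rfl
        rw [this]
        exact div_pos (hWpos t ⟨ht1, ht2⟩) (pow_pos (hsinpos t ht1 ht2) 2)
    exact hmono (Set.left_mem_Icc.mpr hab.le) (Set.right_mem_Icc.mpr hab.le) hab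
  -- limit of v/sin at 0⁺ is 0
  have hv0 : v 0 = 0 := by simp [hv_def]; ring
  have hv1_0 : v1 0 = 0 := by simp [hv1_def]
  have hlim : Filter.Tendsto (fun t => v t / Real.sin t) (nhdsWithin 0 (Set.Ioi 0)) (nhds 0) := by
    have h1 : Filter.Tendsto (fun t => v t / t) (nhdsWithin 0 {(0:ℝ)}ᶜ) (nhds 0) := by
      have := hasDerivAt_iff_tendsto_slope.mp (hv 0)
      rw [hv1_0] at this
      refine this.congr' ?_
      filter_upwards with t
      simp [slope_def_field, hv0, div_eq_mul_inv, mul_comm]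
    have h2 : Filter.Tendsto (fun t => Real.sin t / t) (nhdsWithin 0 {(0:ℝ)}ᶜ) (nhds 1) := by
      have := hasDerivAt_iff_tendsto_slope.mp (Real.hasDerivAt_sin 0)
      rw [Real.cos_zero] at this
      refine this.congr' ?_
      filter_upwards with t
      simp [slope_def_field, div_eq_mul_inv, mul_comm]
    have h3 := h1.div h2 one_ne_zero
    rw [zero_div] at h3
    have h4 : Filter.Tendsto (fun t => v t / Real.sin t) (nhdsWithin 0 {(0:ℝ)}ᶜ) (nhds 0) := by
      refine h3.congr' ?_
      filter_upwards [self_mem_nhdsWithin] with t (ht : t ≠ 0)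
      rcases eq_or_ne (Real.sin t) 0 with hs | hs
      · simp [hs]
      · simp only [Pi.div_apply]; field_simp
    exact h4.mono_left (nhdsWithin_mono 0 (fun x hx => ne_of_gt hx))
  -- deduce 0 ≤ v(Δθ/2)/sin(Δθ/2)
  have hmid : 0 ≤ v (Δθ/2) / Real.sin (Δθ/2) := by
    refine le_of_tendsto hlim ?_
    filter_upwards [Ioo_mem_nhdsGT_of_mem (Set.mem_Ico.mpr ⟨le_refl 0, half_pos hΔ1⟩)] with t ht
    exact (key t (Δθ/2) ht.1 ht.2 (by linarith)).le
  have hfinal : 0 < v Δθ / Real.sin Δθ :=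
    lt_of_le_of_lt hmid (key (Δθ/2) Δθ (half_pos hΔ1) (by linarith) le_rfl)
  have hsinΔ : 0 < Real.sin Δθ := hsinpos Δθ hΔ1 le_rfl
  have hvΔ : 0 < v Δθ := by
    have := mul_pos hfinal hsinΔ
    rwa [div_mul_cancel₀ _ hsinΔ.ne'] at this
  have hvΔ' : 2 * Real.cos Δθ * f θ < f (θ + Δθ) + f (θ - Δθ) := by
    simp only [hv_def] at hvΔ; linarith
  refine ⟨?_, hvΔ'⟩
  have hcos : Real.cos Δθ < 1 := by
    have := Real.cos_lt_cos_of_nonneg_of_le_pi (le_refl 0) (by linarith [Real.pi_pos, hΔ2]) hΔ1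
    rwa [Real.cos_zero] at this
  have hD : 0 < 2 * (1 - Real.cos Δθ) := by linarith
  rw [show f θ + (f (θ + Δθ) - 2 * f θ + f (θ - Δθ)) / (2 * (1 - Real.cos Δθ))
      = (f (θ + Δθ) + f (θ - Δθ) - 2 * Real.cos Δθ * f θ) / (2 * (1 - Real.cos Δθ)) by
    field_simp [(sub_pos.mpr hcos).ne']; ring]
  exact div_pos (by linarith) hD
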